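/- Let λ ≠ 0 be real and let q : [0,1] → ℝ satisfy the integral equation λ²·q(x) = λ·∫₀¹ q(t) dt − ∫₀^x s·q(s) ds for all x ∈ [0,1], with q not identically zero. Then q(x) = C·exp(−x²/(2λ²)) for a constant C ≠ 0, and λ satisfies erf(1/(√2·λ)) = √(2/π), where erf(x) = (2/√π)∫₀^x e^{−t²} dt. -/

import Mathlib

open MeasureTheory Set

/-- Core uniqueness lemma: if the kernel `s * q s` is integrable on `Icc 0 d`, then on
`Icc 0 d` the solution of the Volterra equation is the Gaussian. -/
lemma eigen_core (lam : ℝ) (hlam : lam ≠ 0) (q : ℝ → ℝ) (A : ℝ) (d : ℝ)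
    (hd : d ∈ Set.Icc (0 : ℝ) 1)
    (heq : ∀ x ∈ Set.Icc (0 : ℝ) 1,
      lam ^ 2 * q x = lam * A - ∫ s in Set.Icc (0 : ℝ) x, s * q s)
    (hint : IntegrableOn (fun s => s * q s) (Set.Icc 0 d)) :
    ∀ x ∈ Set.Icc (0 : ℝ) d, q x = q 0 * Real.exp (-x ^ 2 / (2 * lam ^ 2)) := by
  have hlam2 : (lam : ℝ) ^ 2 ≠ 0 := pow_ne_zero 2 hlam
  have hsub : ∀ x ∈ Icc (0 : ℝ) d, x ∈ Icc (0 : ℝ) 1 := fun x hx =>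
    ⟨hx.1, hx.2.trans hd.2⟩
  set f : ℝ → ℝ := fun s => s * q s with hf
  -- express q via the primitive
  have hqx : ∀ x ∈ Icc (0 : ℝ) d,
      q x = (lam * A - ∫ s in Icc (0 : ℝ) x, f s) / lam ^ 2 := by
    intro x hx
    rw [eq_div_iff hlam2]
    linear_combination heq x (hsub x hx)
  have hGcont : ContinuousOn (fun x => ∫ s in Icc (0 : ℝ) x, f s) (Icc 0 d) :=
    intervalIntegral.continuousOn_primitive_Icc hint
  have hqcont : ContinuousOn q (Icc 0 d) :=
    ContinuousOn.congr ((continuousOn_const.sub hGcont).div_const _) hqx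
  have hfcont : ContinuousOn f (Icc 0 d) := continuous_id.continuousOn.mul hqcont
  -- the primitive as interval integral agrees with the set integral
  have hIccInt : ∀ u : ℝ, 0 ≤ u →
      (∫ s in Icc (0 : ℝ) u, f s) = ∫ s in (0 : ℝ)..u, f s := by
    intro u hu
    rw [MeasureTheory.integral_Icc_eq_integral_Ioc, intervalIntegral.integral_of_le hu]
  -- auxiliary function h = q * exp(x^2/(2 lam^2)) has zero right derivative
  set E : ℝ → ℝ := fun u => Real.exp (u ^ 2 / (2 * lam ^ 2)) with hE
  have hEcont : Continuous E := by
    exact Real.continuous_exp.comp ((continuous_pow 2).div_const _)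
  set h : ℝ → ℝ := fun u => q u * E u with hh
  have hhderiv : ∀ x ∈ Ico (0 : ℝ) d, HasDerivWithinAt h 0 (Ici x) x := by
    intro x hx
    have hxIcc : x ∈ Icc (0 : ℝ) d := ⟨hx.1, hx.2.le⟩
    have hmem : Icc (0 : ℝ) d ∈ nhdsWithin x (Ici x) := Icc_mem_nhdsGE_of_mem hx
    have hmem' : Icc (0 : ℝ) d ∈ nhdsWithin x (Ioi x) :=
      nhdsWithin_mono x Ioi_subset_Ici_self hmem
    -- FTC for the primitive
    have hii : IntervalIntegrable f volume 0 x := by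
      have h1 : IntegrableOn f (Icc 0 x) := hint.mono_set (Icc_subset_Icc_right hx.2.le)
      have : uIcc (0 : ℝ) x = Icc 0 x := uIcc_of_le hx.1
      exact (this ▸ h1).intervalIntegrable
    have hG' : HasDerivWithinAt (fun u => ∫ s in (0 : ℝ)..u, f s) (f x) (Ici x) x :=
      intervalIntegral.integral_hasDerivWithinAt_right hii
        ⟨Icc 0 d, hmem', hfcont.aestronglyMeasurable measurableSet_Icc⟩
        ((hfcont x hxIcc).mono_of_mem_nhdsWithin hmem')
    -- derivative of q
    have hq' : HasDerivWithinAt q (-(f x) / lam ^ 2) (Ici x) x := by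
      have h1 : HasDerivWithinAt
          (fun u => (lam * A - ∫ s in (0 : ℝ)..u, f s) / lam ^ 2)
          (-(f x) / lam ^ 2) (Ici x) x := by
        have := ((hasDerivWithinAt_const x (Ici x) (lam * A)).sub hG').div_const (lam ^ 2)
        refine this.congr_deriv ?_
        ring
      apply h1.congr_of_eventuallyEq ?_ ?_
      · filter_upwards [hmem] with u hu
        rw [hqx u hu, hIccInt u hu.1]
      · rw [hqx x hxIcc, hIccInt x hxIcc.1]
    -- derivative of E
    have hE' : HasDerivAt E (E x * (2 * x ^ 1 / (2 * lam ^ 2))) x := by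
      exact ((hasDerivAt_pow 2 x).div_const (2 * lam ^ 2)).exp
    have := hq'.mul hE'.hasDerivWithinAt
    refine this.congr_deriv ?_
    simp only [hf, hE, pow_one]
    field_simp
    ring
  have hhcont : ContinuousOn h (Icc 0 d) := hqcont.mul hEcont.continuousOn
  have hhconst := constant_of_has_deriv_right_zero hhcont hhderiv
  intro x hx
  have hx0 := hhconst x hx
  have h00 : h 0 = q 0 := by simp [hh, hE]
  rw [h00] at hx0
  have hEne : E x ≠ 0 := Real.exp_ne_zero _
  have : q x = q 0 / E x := by
    rw [eq_div_iff hEne]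
    exact hx0
  rw [this, hE]
  show q 0 / Real.exp (x ^ 2 / (2 * lam ^ 2)) = _
  rw [div_eq_mul_inv, ← Real.exp_neg, neg_div]

theorem eigen_integrable (lam : ℝ) (hlam : lam ≠ 0) (q : ℝ → ℝ)
    (heq : ∀ x ∈ Set.Icc (0 : ℝ) 1,
      lam ^ 2 * q x =
        lam * (∫ t in Set.Icc (0 : ℝ) 1, q t) - ∫ s in Set.Icc (0 : ℝ) x, s * q s) :
    IntegrableOn (fun s => s * q s) (Set.Icc (0 : ℝ) 1) := by
  have hlam2 : (lam : ℝ) ^ 2 ≠ 0 := pow_ne_zero 2 hlam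
  set A : ℝ := ∫ t in Set.Icc (0 : ℝ) 1, q t with hA
  set f : ℝ → ℝ := fun s => s * q s with hf
  by_contra hcon
  set F : Set ℝ := {x | x ∈ Icc (0 : ℝ) 1 ∧ ¬ IntegrableOn f (Icc 0 x)} with hF
  have hF1 : (1 : ℝ) ∈ F := ⟨⟨zero_le_one, le_rfl⟩, hcon⟩
  have hbdd : BddBelow F := ⟨0, fun y hy => hy.1.1⟩
  set b : ℝ := sInf F with hb
  have hb_mem : b ∈ Icc (0 : ℝ) 1 :=
    ⟨le_csInf ⟨1, hF1⟩ fun y hy => hy.1.1, csInf_le hbdd hF1⟩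
  have hlt : ∀ x ∈ Icc (0 : ℝ) 1, x < b → IntegrableOn f (Icc 0 x) := by
    intro x hx hxb
    by_contra hc
    exact absurd (csInf_le hbdd ⟨hx, hc⟩) (not_le.2 hxb)
  -- beyond b, q is constant A / lam
  have hup : ∀ x ∈ Icc (0 : ℝ) 1, b < x → q x = A / lam := by
    intro x hx hbx
    have hni : ¬ IntegrableOn f (Icc 0 x) := by
      intro hc
      obtain ⟨y, hyF, hyx⟩ := exists_lt_of_csInf_lt ⟨1, hF1⟩ hbx
      exact hyF.2 (hc.mono_set (Icc_subset_Icc_right hyx.le))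
    have h0 := heq x hx
    rw [MeasureTheory.integral_undef hni, sub_zero] at h0
    rw [eq_div_iff hlam]
    have h2 : lam * (q x * lam) = lam * A := by linear_combination h0
    exact mul_left_cancel₀ hlam h2
  -- integrable up to b
  have hIb : IntegrableOn f (Icc 0 b) := by
    rcases eq_or_lt_of_le hb_mem.1 with hb0 | hb0
    · have hs : volume.restrict (Icc (0 : ℝ) b) = 0 := by
        rw [← hb0, Icc_self]
        exact Measure.restrict_eq_zero.mpr (measure_singleton _)
      rw [IntegrableOn, hs]
      exact integrable_zero_measure
    · have hq_eq : ∀ s ∈ Ico (0 : ℝ) b, q s = q 0 * Real.exp (-s ^ 2 / (2 * lam ^ 2)) := by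
        intro s hs
        have hdb : (s + b) / 2 < b := by linarith [hs.2]
        have hd0 : 0 ≤ (s + b) / 2 := by linarith [hs.1, hb_mem.1]
        have hd1 : (s + b) / 2 ≤ 1 := by linarith [hb_mem.2]
        exact eigen_core lam hlam q A ((s + b) / 2) ⟨hd0, hd1⟩ heq
          (hlt _ ⟨hd0, hd1⟩ hdb) s ⟨hs.1, by linarith [hs.2]⟩
      have hgood : IntegrableOn
          (fun s => s * (q 0 * Real.exp (-s ^ 2 / (2 * lam ^ 2)))) (Ico 0 b) := by
        apply IntegrableOn.mono_set _ Ico_subset_Icc_self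
        apply Continuous.integrableOn_Icc (b := b)
        exact continuous_id.mul (continuous_const.mul
          (Real.continuous_exp.comp ((continuous_pow 2).neg.div_const _)))
      have hres : volume.restrict (Icc (0 : ℝ) b) = volume.restrict (Ico 0 b) :=
        (Measure.restrict_congr_set Ico_ae_eq_Icc).symm
      rw [IntegrableOn, hres]
      exact hgood.congr_fun (fun s hs => by
        show s * (q 0 * Real.exp (-s ^ 2 / (2 * lam ^ 2))) = s * q s
        rw [hq_eq s hs]) measurableSet_Ico
  -- now get a contradiction
  apply hcon
  rcases eq_or_lt_of_le hb_mem.2 with hb1 | hb1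
  · rw [← hb1]; exact hIb
  · have hsplit : Icc (0 : ℝ) 1 = Icc 0 b ∪ Ioc b 1 :=
      (Icc_union_Ioc_eq_Icc hb_mem.1 hb_mem.2).symm
    rw [hsplit]
    refine hIb.union ?_
    have hgood : IntegrableOn (fun s => s * (A / lam)) (Ioc b 1) := by
      apply Continuous.integrableOn_Ioc
      exact continuous_id.mul continuous_const
    exact hgood.congr_fun
      (fun s hs => by
        show s * (A / lam) = s * q s
        rw [hup s ⟨hb_mem.1.trans hs.1.le, hs.2⟩ hs.1]) measurableSet_Ioc

/-- The error function erf(x) = (2/√π)·∫₀ˣ exp(−t²) dt. -/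
noncomputable def erf (x : ℝ) : ℝ :=
  2 / Real.sqrt Real.pi * ∫ t in (0 : ℝ)..x, Real.exp (-t ^ 2)

/-- if λ ≠ 0 and q : [0,1] → ℝ is a not-identically-zero solution of
λ²·q(x) = λ·∫₀¹ q(t) dt − ∫₀ˣ s·q(s) ds, then q(x) = C·exp(−x²/(2λ²)) for some C ≠ 0
and λ satisfies erf(1/(√2·λ)) = √(2/π). -/
theorem eigen_213_equation (lam : ℝ) (hlam : lam ≠ 0) (q : ℝ → ℝ)
    (heq : ∀ x ∈ Set.Icc (0 : ℝ) 1,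
      lam ^ 2 * q x =
        lam * (∫ t in Set.Icc (0 : ℝ) 1, q t) - ∫ s in Set.Icc (0 : ℝ) x, s * q s)
    (hnontriv : ∃ x ∈ Set.Icc (0 : ℝ) 1, q x ≠ 0) :
    (∃ C : ℝ, C ≠ 0 ∧ ∀ x ∈ Set.Icc (0 : ℝ) 1,
        q x = C * Real.exp (-x ^ 2 / (2 * lam ^ 2))) ∧
    erf (1 / (Real.sqrt 2 * lam)) = Real.sqrt (2 / Real.pi) := by
  have hlam2 : (lam : ℝ) ^ 2 ≠ 0 := pow_ne_zero 2 hlam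
  set A : ℝ := ∫ t in Set.Icc (0 : ℝ) 1, q t with hA
  have hintall : IntegrableOn (fun s => s * q s) (Set.Icc (0 : ℝ) 1) :=
    eigen_integrable lam hlam q heq
  have hq : ∀ x ∈ Set.Icc (0 : ℝ) 1, q x = q 0 * Real.exp (-x ^ 2 / (2 * lam ^ 2)) :=
    eigen_core lam hlam q A 1 ⟨zero_le_one, le_rfl⟩ heq hintall
  have hC0 : q 0 ≠ 0 := by
    obtain ⟨x, hx, hqx⟩ := hnontriv
    intro h0
    exact hqx (by rw [hq x hx, h0, zero_mul])
  refine ⟨⟨q 0, hC0, hq⟩, ?_⟩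
  -- eigenvalue equation
  set I : ℝ := ∫ t in (0 : ℝ)..1, Real.exp (-t ^ 2 / (2 * lam ^ 2)) with hI
  have hAval : A = q 0 * I := by
    rw [hA]
    rw [MeasureTheory.setIntegral_congr_fun measurableSet_Icc hq]
    rw [MeasureTheory.integral_Icc_eq_integral_Ioc,
      ← intervalIntegral.integral_of_le (zero_le_one' ℝ)]
    rw [hI, ← intervalIntegral.integral_const_mul]
  have h0 := heq 0 ⟨le_rfl, zero_le_one⟩
  have hzero : (∫ s in Set.Icc (0 : ℝ) 0, s * q s) = 0 := by
    rw [Set.Icc_self]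
    rw [show (volume.restrict ({(0 : ℝ)} : Set ℝ)) = 0 from
      Measure.restrict_eq_zero.mpr (measure_singleton _)]
    exact integral_zero_measure _
  rw [hzero, sub_zero, hAval] at h0
  -- lam = I
  have hlamI : lam = I := by
    have h1 : lam * (lam * q 0) = lam * (I * q 0) := by linear_combination h0
    have h2 := mul_left_cancel₀ hlam h1
    exact mul_right_cancel₀ hC0 h2
  -- positivity of I, hence lam > 0
  have hIint : IntervalIntegrable (fun t : ℝ => Real.exp (-t ^ 2 / (2 * lam ^ 2)))
      volume 0 1 := by
    apply Continuous.intervalIntegrable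
    exact Real.continuous_exp.comp ((continuous_pow 2).neg.div_const _)
  have hIpos : 0 < I :=
    intervalIntegral.intervalIntegral_pos_of_pos hIint (fun x => Real.exp_pos _) one_pos
  have hlampos : 0 < lam := hlamI ▸ hIpos
  have hsqrt2 : (0 : ℝ) < Real.sqrt 2 := Real.sqrt_pos.mpr two_pos
  set c : ℝ := Real.sqrt 2 * lam with hc
  have hcpos : 0 < c := mul_pos hsqrt2 hlampos
  have hcne : c ≠ 0 := hcpos.ne'
  have hc2 : c ^ 2 = 2 * lam ^ 2 := by
    rw [hc, mul_pow, Real.sq_sqrt (by norm_num : (0:ℝ) ≤ 2)]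
  -- substitution
  have hsub : I = c * ∫ u in (0 : ℝ)..(1 / c), Real.exp (-u ^ 2) := by
    have h1 : I = ∫ x in (0 : ℝ)..1, Real.exp (-(x / c) ^ 2) := by
      rw [hI]
      apply intervalIntegral.integral_congr
      intro x _
      show Real.exp (-x ^ 2 / (2 * lam ^ 2)) = Real.exp (-(x / c) ^ 2)
      rw [div_pow, hc2, neg_div]
    rw [h1, intervalIntegral.integral_comp_div (fun u => Real.exp (-u ^ 2)) hcne]
    rw [zero_div, smul_eq_mul]
  have hJ : (∫ u in (0 : ℝ)..(1 / c), Real.exp (-u ^ 2)) = 1 / Real.sqrt 2 := by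
    have h1 : lam = c * ∫ u in (0 : ℝ)..(1 / c), Real.exp (-u ^ 2) := hlamI.trans hsub
    have h2 : (∫ u in (0 : ℝ)..(1 / c), Real.exp (-u ^ 2)) = lam / c := by
      rw [h1]; field_simp
    rw [h2, hc]
    field_simp
  -- conclude
  unfold erf
  rw [show (1 : ℝ) / (Real.sqrt 2 * lam) = 1 / c from rfl, hJ]
  have hpi : (0 : ℝ) < Real.pi := Real.pi_pos
  have hpisqrt : (0 : ℝ) < Real.sqrt Real.pi := Real.sqrt_pos.mpr hpi
  rw [show Real.sqrt (2 / Real.pi) = Real.sqrt 2 / Real.sqrt Real.pi from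
    Real.sqrt_div (by norm_num) Real.pi]
  have h2 : Real.sqrt 2 * Real.sqrt 2 = 2 := Real.mul_self_sqrt (by norm_num)
  have hs2 : Real.sqrt 2 ≠ 0 := hsqrt2.ne'
  field_simp
  linear_combination (-1 : ℝ) * h2
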